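/- For all n ≥ 0, Â_{2n+1}(-1) = E_{2n+1}, where Â_n(t) = Σ_{π ∈ S_n} t^{altdes(π)} and E_{2n+1} is the odd Euler number (tangent number), i.e., the number of down-up alternating permutations of length 2n+1. Equivalently, Σ_{n≥0} Â_{2n+1}(-1) z^{2n+1}/(2n+1)! = tan(z) and Â_{2n}(-1) = 0 for n ≥ 1. -/

import Mathlib

open Finset Polynomial

/-- the entry following position `i` (0-based), well-defined when `i+1 < n` -/
def finSucc {n : ℕ} (i : Fin n) : Fin n := ⟨((i : ℕ) + 1) % n, Nat.mod_lt _ i.pos⟩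

def altDesAt {n : ℕ} (π : Equiv.Perm (Fin n)) (i : Fin n) : Prop :=
  (i : ℕ) + 1 < n ∧
    (if ((i : ℕ) + 1) % 2 = 0 then π i < π (finSucc i) else π (finSucc i) < π i)

instance {n : ℕ} (π : Equiv.Perm (Fin n)) (i : Fin n) : Decidable (altDesAt π i) := by
  unfold altDesAt; infer_instance

/-- number of alternating descents -/
def altdes {n : ℕ} (π : Equiv.Perm (Fin n)) : ℕ :=
  (Finset.univ.filter (fun i => altDesAt π i)).card

/-- alternating major index -/
def altmaj {n : ℕ} (π : Equiv.Perm (Fin n)) : ℕ :=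
  ∑ i ∈ Finset.univ.filter (fun i => altDesAt π i), ((i : ℕ) + 1)

/-- `π` is down-up alternating: `π(1) > π(2) < π(3) > π(4) < ⋯` -/
def DownUp {n : ℕ} (π : Equiv.Perm (Fin n)) : Prop :=
  ∀ i : Fin n, (i : ℕ) + 1 < n →
    (if (i : ℕ) % 2 = 0 then π (finSucc i) < π i else π i < π (finSucc i))

instance {n : ℕ} (π : Equiv.Perm (Fin n)) : Decidable (DownUp π) := by
  unfold DownUp; infer_instance

/-- the Euler number `E_m`: the number of down-up permutations of length `m` -/
def eulerNum (m : ℕ) : ℕ :=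
  (Finset.univ.filter (fun π : Equiv.Perm (Fin m) => DownUp π)).card

namespace Stmt18Aux

variable {n : ℕ}

/-- the word of a permutation, with sentinel value `n` out of range -/
def w (π : Equiv.Perm (Fin n)) (i : ℕ) : ℕ :=
  if h : i < n then (π ⟨i, h⟩ : ℕ) else n

lemma w_lt (π : Equiv.Perm (Fin n)) {i : ℕ} (h : i < n) : w π i < n := by
  simp only [w, dif_pos h]; exact (π ⟨i, h⟩).isLt

lemma w_sentinel (π : Equiv.Perm (Fin n)) {i : ℕ} (h : ¬ i < n) : w π i = n := by
  simp only [w, dif_neg h]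

lemma w_inj (π : Equiv.Perm (Fin n)) {i j : ℕ} (hi : i < n) (hj : j < n)
    (h : w π i = w π j) : i = j := by
  simp only [w, dif_pos hi, dif_pos hj] at h
  have := π.injective (Fin.val_injective h)
  exact congrArg Fin.val this

lemma w_ne (π : Equiv.Perm (Fin n)) {i j : ℕ} (hi : i < n) (hj : j < n)
    (h : i ≠ j) : w π i ≠ w π j := fun hc => h (w_inj π hi hj hc)

/-- rotation on segment `[a,b]` : `b ↦ a`, `i ↦ i+1` for `a ≤ i < b`. -/
def rotF (a b i : ℕ) : ℕ := if i = b then a else if a ≤ i ∧ i < b then i + 1 else i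

def rotI (a b i : ℕ) : ℕ := if i = a then b else if a < i ∧ i ≤ b then i - 1 else i

lemma rotI_rotF {a b : ℕ} (hab : a ≤ b) (i : ℕ) : rotI a b (rotF a b i) = i := by
  unfold rotF rotI; split_ifs <;> omega

lemma rotF_rotI {a b : ℕ} (hab : a ≤ b) (i : ℕ) : rotF a b (rotI a b i) = i := by
  unfold rotF rotI; split_ifs <;> omega

lemma rotF_lt {a b i : ℕ} (hab : a ≤ b) (hb : b < n) (hi : i < n) : rotF a b i < n := by
  unfold rotF; split_ifs <;> omega

lemma rotI_lt {a b i : ℕ} (hab : a ≤ b) (hb : b < n) (hi : i < n) : rotI a b i < n := by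
  unfold rotI; split_ifs <;> omega

def rotPerm (a b : ℕ) (hab : a ≤ b) (hb : b < n) : Equiv.Perm (Fin n) where
  toFun i := ⟨rotF a b i, rotF_lt hab hb i.isLt⟩
  invFun i := ⟨rotI a b i, rotI_lt hab hb i.isLt⟩
  left_inv i := Fin.ext (rotI_rotF hab i)
  right_inv i := Fin.ext (rotF_rotI hab i)

lemma rotPerm_apply (a b : ℕ) (hab : a ≤ b) (hb : b < n) (i : Fin n) :
    ((rotPerm a b hab hb) i : ℕ) = rotF a b i := rfl

lemma rotPerm_symm_apply (a b : ℕ) (hab : a ≤ b) (hb : b < n) (i : Fin n) :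
    (((rotPerm a b hab hb).symm) i : ℕ) = rotI a b i := rfl

/-- left block of `p` is empty (prev entry bigger, or at the left end) -/
def LempAt (π : Equiv.Perm (Fin n)) (p : ℕ) : Prop := p = 0 ∨ w π p < w π (p - 1)

/-- right block of `p` is empty (next entry bigger, incl. sentinel) -/
def RempAt (π : Equiv.Perm (Fin n)) (p : ℕ) : Prop := w π p < w π (p + 1)

def specAt (π : Equiv.Perm (Fin n)) (p : ℕ) : Prop := ¬ (LempAt π p ↔ RempAt π p)

instance (π : Equiv.Perm (Fin n)) (p : ℕ) : Decidable (LempAt π p) := by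
  unfold LempAt; infer_instance
instance (π : Equiv.Perm (Fin n)) (p : ℕ) : Decidable (RempAt π p) := by
  unfold RempAt; infer_instance
instance (π : Equiv.Perm (Fin n)) (p : ℕ) : Decidable (specAt π p) := by
  unfold specAt; infer_instance

def posOf (π : Equiv.Perm (Fin n)) (x : Fin n) : ℕ := (π.symm x : ℕ)

lemma posOf_lt (π : Equiv.Perm (Fin n)) (x : Fin n) : posOf π x < n := (π.symm x).isLt

lemma w_posOf (π : Equiv.Perm (Fin n)) (x : Fin n) : w π (posOf π x) = x := by
  simp [w, posOf]

def specSet (π : Equiv.Perm (Fin n)) : Finset (Fin n) :=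
  Finset.univ.filter (fun x => specAt π (posOf π x))

lemma aOf_ex (π : Equiv.Perm (Fin n)) (x : Fin n) :
    ∃ t, ∀ j, t ≤ j → j < posOf π x → w π j < x := ⟨posOf π x, fun j h1 h2 => by omega⟩

/-- left end of the small block left of `x` -/
def aOf (π : Equiv.Perm (Fin n)) (x : Fin n) : ℕ := Nat.find (aOf_ex π x)

lemma bOf_ex (π : Equiv.Perm (Fin n)) (x : Fin n) :
    ∃ d, ¬ (w π (posOf π x + d + 1) < x) := by
  refine ⟨n, ?_⟩
  rw [w_sentinel π (by omega)]
  exact fun hc => absurd x.isLt (by omega)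

/-- right end of the small block right of `x` -/
def bOf (π : Equiv.Perm (Fin n)) (x : Fin n) : ℕ := posOf π x + Nat.find (bOf_ex π x)

lemma aOf_le (π : Equiv.Perm (Fin n)) (x : Fin n) : aOf π x ≤ posOf π x :=
  Nat.find_le (fun j h1 h2 => by omega)

lemma le_bOf (π : Equiv.Perm (Fin n)) (x : Fin n) : posOf π x ≤ bOf π x := Nat.le_add_right _ _

lemma bOf_lt (π : Equiv.Perm (Fin n)) (x : Fin n) : bOf π x < n := by
  have hp := posOf_lt π x
  have : Nat.find (bOf_ex π x) ≤ n - 1 - posOf π x := by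
    apply Nat.find_le
    rw [w_sentinel π (by omega)]
    exact fun hc => absurd x.isLt (by omega)
  unfold bOf; omega

/-- block property for `aOf` -/
lemma aOf_block (π : Equiv.Perm (Fin n)) (x : Fin n) {j : ℕ} (h1 : aOf π x ≤ j)
    (h2 : j < posOf π x) : w π j < x := Nat.find_spec (aOf_ex π x) j h1 h2

lemma bOf_block (π : Equiv.Perm (Fin n)) (x : Fin n) {j : ℕ} (h1 : posOf π x < j)
    (h2 : j ≤ bOf π x) : w π j < x := by
  have := Nat.find_min (bOf_ex π x) (m := j - posOf π x - 1) (by unfold bOf at h2; omega)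
  push_neg at this
  have e : posOf π x + (j - posOf π x - 1) + 1 = j := by omega
  rwa [e] at this

lemma bOf_wall (π : Equiv.Perm (Fin n)) (x : Fin n) : (x : ℕ) < w π (bOf π x + 1) := by
  have h := Nat.find_spec (bOf_ex π x)
  have hb : bOf π x + 1 = posOf π x + Nat.find (bOf_ex π x) + 1 := rfl
  rw [← hb] at h
  rcases Nat.lt_or_ge (bOf π x + 1) n with hc | hc
  · rcases Nat.lt_trichotomy (x : ℕ) (w π (bOf π x + 1)) with h' | h' | h'
    · exact h'
    · exfalso
      have := w_posOf π x
      have := w_inj π (by omega : bOf π x + 1 < n) (posOf_lt π x) (by omega)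
      have := le_bOf π x
      omega
    · omega
  · rw [w_sentinel π (by omega)]; exact x.isLt


lemma aOf_wall (π : Equiv.Perm (Fin n)) (x : Fin n) (h : aOf π x ≠ 0) :
    (x : ℕ) < w π (aOf π x - 1) := by
  have hm := Nat.find_min (aOf_ex π x) (m := aOf π x - 1)
    (show aOf π x - 1 < aOf π x by omega)
  push_neg at hm
  obtain ⟨j, hj1, hj2, hj3⟩ := hm
  have hj : j = aOf π x - 1 := by
    rcases Nat.lt_or_ge j (aOf π x) with h' | h'
    · omega
    · exact absurd (aOf_block π x h' hj2) (by omega)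
  subst hj
  have hp := posOf_lt π x
  rcases Nat.lt_trichotomy (x : ℕ) (w π (aOf π x - 1)) with h' | h' | h'
  · exact h'
  · exfalso
    have := w_posOf π x
    have := w_inj π (by omega : aOf π x - 1 < n) (posOf_lt π x) (by omega)
    omega
  · omega

/-- Case A data at a special `x` with nonempty left block:
`a < p < n`, the block `[a,p)` has small values, wall at `a-1`, and `Remp` holds. -/
structure CaseA (π : Equiv.Perm (Fin n)) (x : Fin n) : Prop where
  hp0 : 0 < posOf π x
  ha : aOf π x < posOf π x
  hwall : aOf π x = 0 ∨ (x : ℕ) < w π (aOf π x - 1)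
  hremp : (x : ℕ) < w π (posOf π x + 1)

structure CaseB (π : Equiv.Perm (Fin n)) (x : Fin n) : Prop where
  hp1 : posOf π x + 1 < n
  hb : posOf π x < bOf π x
  hwall : (x : ℕ) < w π (bOf π x + 1)
  hlemp : posOf π x = 0 ∨ (x : ℕ) < w π (posOf π x - 1)

lemma caseA_of_spec {π : Equiv.Perm (Fin n)} {x : Fin n}
    (hs : specAt π (posOf π x)) (hL : ¬ LempAt π (posOf π x)) : CaseA π x := by
  unfold specAt at hs
  have hR : RempAt π (posOf π x) := by tauto
  unfold LempAt at hL
  push_neg at hL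
  obtain ⟨hp0, hL2⟩ := hL
  have hp : posOf π x < n := posOf_lt π x
  have hx := w_posOf π x
  have hne : w π (posOf π x - 1) ≠ w π (posOf π x) :=
    w_ne π (by omega) hp (by omega)
  have hblock : w π (posOf π x - 1) < (x : ℕ) := by omega
  have ha : aOf π x ≤ posOf π x - 1 := by
    apply Nat.find_le
    intro j h1 h2
    have hj : j = posOf π x - 1 := by omega
    rw [hj]; omega
  refine ⟨by omega, by omega, ?_, ?_⟩
  · rcases Nat.eq_zero_or_pos (aOf π x) with h | h
    · exact Or.inl h
    · exact Or.inr (aOf_wall π x (by omega))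
  · unfold RempAt at hR; omega

lemma caseB_of_spec {π : Equiv.Perm (Fin n)} {x : Fin n}
    (hs : specAt π (posOf π x)) (hL : LempAt π (posOf π x)) : CaseB π x := by
  unfold specAt at hs
  have hR : ¬ RempAt π (posOf π x) := by tauto
  unfold RempAt at hR
  push_neg at hR
  have hp : posOf π x < n := posOf_lt π x
  have hx := w_posOf π x
  have hp1 : posOf π x + 1 < n := by
    by_contra hc
    rw [w_sentinel π (by omega)] at hR
    omega
  have hne : w π (posOf π x + 1) ≠ w π (posOf π x) := w_ne π (by omega) hp (by omega)
  have hblock : w π (posOf π x + 1) < (x : ℕ) := by omega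
  have hb : posOf π x < bOf π x := by
    have : 0 < Nat.find (bOf_ex π x) := by
      rcases Nat.eq_zero_or_pos (Nat.find (bOf_ex π x)) with h | h
      · exfalso
        have hfs := Nat.find_spec (bOf_ex π x)
        rw [h] at hfs
        have e : posOf π x + 0 + 1 = posOf π x + 1 := by omega
        rw [e] at hfs
        exact hfs (by omega)
      · exact h
    unfold bOf; omega
  refine ⟨hp1, hb, bOf_wall π x, ?_⟩
  unfold LempAt at hL
  rcases Nat.eq_zero_or_pos (posOf π x) with h0 | h0
  · exact Or.inl h0
  · rcases hL with h | h
    · omega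
    · right; omega

def phiA (π : Equiv.Perm (Fin n)) (x : Fin n) : Equiv.Perm (Fin n) :=
  π * (rotPerm (aOf π x) (posOf π x) (aOf_le π x) (posOf_lt π x))⁻¹

def phiB (π : Equiv.Perm (Fin n)) (x : Fin n) : Equiv.Perm (Fin n) :=
  π * rotPerm (posOf π x) (bOf π x) (le_bOf π x) (bOf_lt π x)

lemma w_phiA (π : Equiv.Perm (Fin n)) (x : Fin n) (i : ℕ) :
    w (phiA π x) i = w π (rotI (aOf π x) (posOf π x) i) := by
  rcases Nat.lt_or_ge i n with h | h
  · have h2 : rotI (aOf π x) (posOf π x) i < n := rotI_lt (aOf_le π x) (posOf_lt π x) h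
    simp only [w, dif_pos h, dif_pos h2, phiA]
    rfl
  · have h2 : rotI (aOf π x) (posOf π x) i = i := by
      have := posOf_lt π x; have := aOf_le π x
      unfold rotI; split_ifs <;> omega
    rw [h2, w_sentinel π (by omega), w_sentinel _ (by omega)]

lemma w_phiB (π : Equiv.Perm (Fin n)) (x : Fin n) (i : ℕ) :
    w (phiB π x) i = w π (rotF (posOf π x) (bOf π x) i) := by
  rcases Nat.lt_or_ge i n with h | h
  · have h2 : rotF (posOf π x) (bOf π x) i < n := rotF_lt (le_bOf π x) (bOf_lt π x) h
    simp only [w, dif_pos h, dif_pos h2, phiB]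
    rfl
  · have h2 : rotF (posOf π x) (bOf π x) i = i := by
      have := bOf_lt π x
      unfold rotF; split_ifs <;> omega
    rw [h2, w_sentinel π (by omega), w_sentinel _ (by omega)]

lemma posOf_phiA (π : Equiv.Perm (Fin n)) (x y : Fin n) :
    posOf (phiA π x) y = rotF (aOf π x) (posOf π x) (posOf π y) := by
  show ((phiA π x)⁻¹ y : ℕ) = _
  simp only [phiA, mul_inv_rev, inv_inv, Equiv.Perm.mul_apply]
  rfl

lemma posOf_phiB (π : Equiv.Perm (Fin n)) (x y : Fin n) :
    posOf (phiB π x) y = rotI (posOf π x) (bOf π x) (posOf π y) := by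
  show ((phiB π x)⁻¹ y : ℕ) = _
  simp only [phiB, mul_inv_rev, Equiv.Perm.mul_apply]
  rfl


lemma rotI_self {a b m : ℕ} (hab : a ≤ b) (h : m < a ∨ b < m) : rotI a b m = m := by
  unfold rotI; split_ifs <;> omega

lemma rotI_pred {a b m : ℕ} (h1 : a < m) (h2 : m ≤ b) : rotI a b m = m - 1 := by
  unfold rotI; split_ifs <;> omega

lemma rotI_left {a b : ℕ} : rotI a b a = b := by unfold rotI; simp

lemma rotF_self {a b m : ℕ} (hab : a ≤ b) (h : m < a ∨ b < m) : rotF a b m = m := by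
  unfold rotF; split_ifs <;> omega

lemma rotF_succ {a b m : ℕ} (h1 : a ≤ m) (h2 : m < b) : rotF a b m = m + 1 := by
  unfold rotF; split_ifs <;> omega

lemma rotF_right {a b : ℕ} (h : a ≤ b) : rotF a b b = a := by unfold rotF; simp

section CaseALemmas

variable {π : Equiv.Perm (Fin n)} {x : Fin n}

lemma phiA_posOf_x (hA : CaseA π x) : posOf (phiA π x) x = aOf π x := by
  rw [posOf_phiA, rotF_right (le_of_lt hA.ha)]

lemma phiA_w_left (i : ℕ) (h : i < aOf π x ∨ posOf π x < i) : w (phiA π x) i = w π i := by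
  rw [w_phiA, rotI_self (aOf_le π x) h]

lemma phiA_w_at_a : w (phiA π x) (aOf π x) = w π (posOf π x) := by
  rw [w_phiA, rotI_left]

lemma phiA_w_mid (i : ℕ) (h1 : aOf π x < i) (h2 : i ≤ posOf π x) :
    w (phiA π x) i = w π (i - 1) := by
  rw [w_phiA, rotI_pred h1 h2]

/-- after `phiA`, `x` sits at `aOf π x` and is special there with `Lemp` -/
lemma phiA_lemp_x (hA : CaseA π x) : LempAt (phiA π x) (posOf (phiA π x) x) := by
  rw [phiA_posOf_x hA]
  rcases Nat.eq_zero_or_pos (aOf π x) with h | h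
  · exact Or.inl h
  · right
    rw [phiA_w_at_a, phiA_w_left (aOf π x - 1) (by omega), w_posOf]
    rcases hA.hwall with h' | h'
    · omega
    · exact h'

lemma phiA_not_remp_x (hA : CaseA π x) : ¬ RempAt (phiA π x) (posOf (phiA π x) x) := by
  rw [phiA_posOf_x hA]
  unfold RempAt
  rw [phiA_w_at_a, phiA_w_mid (aOf π x + 1) (by omega) (by have := hA.ha; omega), w_posOf]
  simp only [Nat.add_sub_cancel]
  have := aOf_block π x (le_refl (aOf π x)) hA.ha
  omega

lemma phiA_spec_x (hA : CaseA π x) : specAt (phiA π x) (posOf (phiA π x) x) := by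
  unfold specAt
  have h1 := phiA_lemp_x hA
  have h2 := phiA_not_remp_x hA
  tauto

lemma phiA_bOf (hA : CaseA π x) : bOf (phiA π x) x = posOf π x := by
  have hpos := phiA_posOf_x hA
  have hfind : Nat.find (bOf_ex (phiA π x) x) = posOf π x - aOf π x := by
    rw [Nat.find_eq_iff]
    constructor
    · intro hc
      rw [hpos] at hc
      have e : aOf π x + (posOf π x - aOf π x) + 1 = posOf π x + 1 := by
        have := hA.ha; omega
      rw [e, phiA_w_left _ (by omega)] at hc
      exact absurd hc (by have := hA.hremp; omega)
    · intro k hk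
      rw [not_not, hpos]
      have e : aOf π x + k + 1 ≤ posOf π x := by omega
      rw [phiA_w_mid (aOf π x + k + 1) (by omega) e]
      simp only [Nat.add_sub_cancel]
      exact aOf_block π x (by omega) (by omega)
  show posOf (phiA π x) x + Nat.find (bOf_ex (phiA π x) x) = posOf π x
  rw [hfind, hpos]
  have := hA.ha; omega

lemma rotPerm_congr {a b a' b' : ℕ} (ha : a = a') (hb : b = b') (h1 : a ≤ b) (h2 : b < n)
    (h1' : a' ≤ b') (h2' : b' < n) : rotPerm a b h1 h2 = rotPerm a' b' h1' h2' := by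
  subst ha; subst hb; rfl

lemma phiB_phiA (hA : CaseA π x) : phiB (phiA π x) x = π := by
  unfold phiB
  rw [show rotPerm (posOf (phiA π x) x) (bOf (phiA π x) x) (le_bOf _ x) (bOf_lt _ x)
      = rotPerm (aOf π x) (posOf π x) (aOf_le π x) (posOf_lt π x) from
    rotPerm_congr (phiA_posOf_x hA) (phiA_bOf hA) _ _ _ _]
  unfold phiA
  group


lemma phiA_spec_small (hA : CaseA π x) (y : Fin n) (hy : (y : ℕ) < (x : ℕ)) :
    (specAt (phiA π x) (posOf (phiA π x) y) ↔ specAt π (posOf π y)) := by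
  have hposy := posOf_phiA π x y
  have ha := hA.ha
  have hp0 := hA.hp0
  have hremp := hA.hremp
  have hwall := hA.hwall
  have hx := w_posOf π x
  have hwq := w_posOf π y
  have hqn := posOf_lt π y
  have hpn := posOf_lt π x
  have hale := aOf_le π x
  have hqp : posOf π y ≠ posOf π x := by
    intro h
    rw [h, hx] at hwq
    omega
  rcases Nat.lt_or_ge (posOf π y) (aOf π x) with h1 | h1
  · -- q < a : untouched region
    have hq1a : posOf π y + 1 < aOf π x := by
      rcases Nat.lt_or_ge (posOf π y + 1) (aOf π x) with h | h
      · exact h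
      · exfalso
        have he : posOf π y = aOf π x - 1 := by omega
        rcases hwall with h' | h'
        · omega
        · rw [← he] at h'
          omega
    rw [hposy, rotF_self hale (Or.inl h1)]
    unfold specAt LempAt RempAt
    rw [phiA_w_left (posOf π y) (by omega), phiA_w_left (posOf π y - 1) (by omega),
      phiA_w_left (posOf π y + 1) (by omega)]
  · rcases Nat.lt_or_ge (posOf π y) (posOf π x) with h2 | h2
    · -- a ≤ q < p : block region
      rw [hposy, rotF_succ h1 h2]
      unfold specAt LempAt RempAt
      simp only [Nat.add_sub_cancel]
      rw [phiA_w_mid (posOf π y + 1) (by omega) (by omega)]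
      simp only [Nat.add_sub_cancel]
      have hblockq : w π (posOf π y) < (x : ℕ) := aOf_block π x h1 h2
      rcases Nat.eq_or_lt_of_le h1 with hqa | hqa
      · -- q = a
        rw [← hqa, phiA_w_at_a, hx]
        rcases Nat.lt_or_ge (aOf π x + 1) (posOf π x) with h3 | h3
        · -- q + 2 ≤ p
          rw [phiA_w_mid (aOf π x + 1 + 1) (by omega) (by omega)]
          simp only [Nat.add_sub_cancel]
          rw [← hqa] at hwq
          have hblock1 : w π (aOf π x + 1) < (x : ℕ) := aOf_block π x (by omega) (by omega)
          rcases hwall with h' | h' <;> rw [← hqa] at hblockq <;> omega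
        · -- q + 1 = p
          have he : aOf π x + 1 = posOf π x := by omega
          rw [he, phiA_w_left (posOf π x + 1) (by omega), hx]
          rw [← hqa] at hwq hblockq
          rcases hwall with h' | h' <;> omega
      · -- a < q
        rw [phiA_w_mid (posOf π y) (by omega) (by omega)]
        rcases Nat.lt_or_ge (posOf π y + 1) (posOf π x) with h3 | h3
        · rw [phiA_w_mid (posOf π y + 1 + 1) (by omega) (by omega)]
          simp only [Nat.add_sub_cancel]
          omega
        · have he : posOf π y + 1 = posOf π x := by omega
          rw [he, phiA_w_left (posOf π x + 1) (by omega), hx]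
          have hblockq1 : w π (posOf π x - 1) < (x : ℕ) := aOf_block π x (by omega) (by omega)
          omega
    · -- q > p  (q = p excluded, q = p+1 excluded by hremp)
      have h4 : posOf π x + 1 < posOf π y := by
        rcases Nat.lt_or_ge (posOf π x + 1) (posOf π y) with h | h
        · exact h
        · exfalso
          have he : posOf π y = posOf π x + 1 := by omega
          rw [he] at hwq
          omega
      rw [hposy, rotF_self hale (Or.inr (by omega))]
      unfold specAt LempAt RempAt
      rw [phiA_w_left (posOf π y) (by omega), phiA_w_left (posOf π y - 1) (by omega),
        phiA_w_left (posOf π y + 1) (by omega)]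


end CaseALemmas

/-- local descent sign at comparison `i` -/
def dsign (π : Equiv.Perm (Fin n)) (i : ℕ) : ℤ := if w π (i + 1) < w π i then -1 else 1

/-- global descent sign -/
def S (π : Equiv.Perm (Fin n)) : ℤ := ∏ i ∈ Finset.range n, dsign π i

lemma dsign_ne_zero (π : Equiv.Perm (Fin n)) (i : ℕ) : dsign π i ≠ 0 := by
  unfold dsign; split_ifs <;> omega

lemma S_ne_zero (π : Equiv.Perm (Fin n)) : S π ≠ 0 :=
  Finset.prod_ne_zero_iff.mpr (fun i _ => dsign_ne_zero π i)

section SignLemmas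
variable {π : Equiv.Perm (Fin n)} {x : Fin n}

lemma S_phiA (hA : CaseA π x) : S (phiA π x) = - S π := by
  have ha := hA.ha
  have hp0 := hA.hp0
  have hremp := hA.hremp
  have hwall := hA.hwall
  have hx := w_posOf π x
  have hpn := posOf_lt π x
  have hale := aOf_le π x
  have hmema : aOf π x ∈ Finset.range n := Finset.mem_range.mpr (by omega)
  have hmemp : posOf π x - 1 ∈ Finset.range n := Finset.mem_range.mpr (by omega)
  unfold S
  rw [← Finset.mul_prod_erase (Finset.range n) (dsign (phiA π x)) hmema,
    ← Finset.mul_prod_erase (Finset.range n) (dsign π) hmemp]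
  have e1 : dsign (phiA π x) (aOf π x) = -1 := by
    unfold dsign
    rw [phiA_w_at_a, phiA_w_mid (aOf π x + 1) (by omega) (by omega)]
    simp only [Nat.add_sub_cancel]
    rw [hx]
    have := aOf_block π x (le_refl _) ha
    rw [if_pos (by omega)]
  have e2 : dsign π (posOf π x - 1) = 1 := by
    unfold dsign
    have e : posOf π x - 1 + 1 = posOf π x := by omega
    rw [e, hx]
    have := aOf_block π x (show aOf π x ≤ posOf π x - 1 by omega) (by omega)
    rw [if_neg (by omega)]
  rw [e1, e2]
  have hprod : ∏ i ∈ (Finset.range n).erase (aOf π x), dsign (phiA π x) i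
      = ∏ i ∈ (Finset.range n).erase (posOf π x - 1), dsign π i := by
    apply Finset.prod_nbij' (fun i => rotI (aOf π x) (posOf π x - 1) i)
      (fun i => rotF (aOf π x) (posOf π x - 1) i)
    · intro i hi
      obtain ⟨hne, hir⟩ := Finset.mem_erase.mp hi
      have hirn := Finset.mem_range.mp hir
      refine Finset.mem_erase.mpr ⟨?_, Finset.mem_range.mpr (rotI_lt (by omega) (by omega) hirn)⟩
      intro hc
      have := rotF_rotI (show aOf π x ≤ posOf π x - 1 by omega) i
      rw [hc, rotF_right (by omega)] at this
      exact hne this.symm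
    · intro i hi
      obtain ⟨hne, hir⟩ := Finset.mem_erase.mp hi
      have hirn := Finset.mem_range.mp hir
      refine Finset.mem_erase.mpr ⟨?_, Finset.mem_range.mpr (rotF_lt (by omega) (by omega) hirn)⟩
      intro hc
      have := rotI_rotF (show aOf π x ≤ posOf π x - 1 by omega) i
      rw [hc, rotI_left] at this
      exact hne this.symm
    · intro i _; exact rotF_rotI (by omega) i
    · intro i _; exact rotI_rotF (by omega) i
    · intro i hi
      obtain ⟨hne, hir⟩ := Finset.mem_erase.mp hi
      have hirn := Finset.mem_range.mp hir
      rcases Nat.lt_or_ge i (aOf π x) with h1 | h1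
      · -- i < a
        rw [rotI_self (by omega) (Or.inl h1)]
        unfold dsign
        rw [phiA_w_left i (by omega)]
        rcases Nat.lt_or_ge (i+1) (aOf π x) with h2 | h2
        · rw [phiA_w_left (i+1) (by omega)]
        · have he : i + 1 = aOf π x := by omega
          rw [he, phiA_w_at_a, hx]
          have hb : w π (aOf π x) < (x : ℕ) := aOf_block π x (le_refl _) ha
          have hw : (x : ℕ) < w π i := by
            rcases hwall with h' | h'
            · omega
            · have : i = aOf π x - 1 := by omega
              rw [this]; exact h'
          rw [if_pos (by omega), if_pos (by omega)]
      · rcases Nat.lt_or_ge i (posOf π x) with h2 | h2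
        · -- a < i < p  (i ≠ a)
          have hia : aOf π x < i := by omega
          rw [rotI_pred hia (by omega)]
          unfold dsign
          rw [phiA_w_mid i (by omega) (by omega), phiA_w_mid (i+1) (by omega) (by omega)]
          simp only [Nat.add_sub_cancel]
          have e : i - 1 + 1 = i := by omega
          rw [e]
        · rcases Nat.eq_or_lt_of_le h2 with h3 | h3
          · -- i = p
            rw [rotI_self (by omega) (Or.inr (by omega))]
            unfold dsign
            rw [phiA_w_mid i (by omega) (by omega), phiA_w_left (i+1) (by omega)]
            have hb1 : w π (i - 1) < (x : ℕ) := by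
              have hbb := aOf_block π x (show aOf π x ≤ posOf π x - 1 by omega)
                (show posOf π x - 1 < posOf π x by omega)
              have e : posOf π x - 1 = i - 1 := by omega
              rwa [e] at hbb
            have hxi : w π i = (x : ℕ) := by rw [← h3]; exact hx
            have hri : (x : ℕ) < w π (i + 1) := by
              have e : posOf π x + 1 = i + 1 := by omega
              rw [← e]; exact hremp
            rw [if_neg (by omega), if_neg (by omega)]
          · -- i > p
            rw [rotI_self (by omega) (Or.inr (by omega))]
            unfold dsign
            rw [phiA_w_left i (by omega), phiA_w_left (i+1) (by omega)]
  rw [hprod]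
  ring

end SignLemmas

section CaseBLemmas
variable {π : Equiv.Perm (Fin n)} {x : Fin n}

lemma phiB_posOf_x : posOf (phiB π x) x = bOf π x := by
  rw [posOf_phiB, rotI_left]

lemma phiB_w_left (i : ℕ) (h : i < posOf π x ∨ bOf π x < i) : w (phiB π x) i = w π i := by
  rw [w_phiB, rotF_self (le_bOf π x) h]

lemma phiB_w_at_b (hB : CaseB π x) : w (phiB π x) (bOf π x) = w π (posOf π x) := by
  rw [w_phiB, rotF_right (le_bOf π x)]

lemma phiB_w_mid (i : ℕ) (h1 : posOf π x ≤ i) (h2 : i < bOf π x) :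
    w (phiB π x) i = w π (i + 1) := by
  rw [w_phiB, rotF_succ h1 h2]

lemma phiB_not_lemp_x (hB : CaseB π x) : ¬ LempAt (phiB π x) (posOf (phiB π x) x) := by
  rw [phiB_posOf_x]
  unfold LempAt
  have hb := hB.hb
  rw [phiB_w_at_b hB, phiB_w_mid (bOf π x - 1) (by omega) (by omega), w_posOf]
  have e : bOf π x - 1 + 1 = bOf π x := by omega
  rw [e]
  have := bOf_block π x (show posOf π x < bOf π x from hb) (le_refl _)
  omega

lemma phiB_remp_x (hB : CaseB π x) : RempAt (phiB π x) (posOf (phiB π x) x) := by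
  rw [phiB_posOf_x]
  unfold RempAt
  rw [phiB_w_at_b hB, phiB_w_left (bOf π x + 1) (by omega), w_posOf]
  exact hB.hwall

lemma phiB_spec_x (hB : CaseB π x) : specAt (phiB π x) (posOf (phiB π x) x) := by
  unfold specAt
  have h1 := phiB_not_lemp_x hB
  have h2 := phiB_remp_x hB
  tauto

lemma phiB_aOf (hB : CaseB π x) : aOf (phiB π x) x = posOf π x := by
  have hb := hB.hb
  have hlemp := hB.hlemp
  have hbn := bOf_lt π x
  show Nat.find (aOf_ex (phiB π x) x) = posOf π x
  rw [Nat.find_eq_iff]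
  constructor
  · intro j h1 h2
    rw [phiB_posOf_x] at h2
    rw [phiB_w_mid j h1 h2]
    exact bOf_block π x (by omega) (by omega)
  · intro t ht
    intro hP
    have hp0 : 0 < posOf π x := by omega
    have := hP (posOf π x - 1) (by omega) (by rw [phiB_posOf_x]; omega)
    rw [phiB_w_left (posOf π x - 1) (by omega)] at this
    rcases hlemp with h | h
    · omega
    · omega

lemma phiA_phiB (hB : CaseB π x) : phiA (phiB π x) x = π := by
  unfold phiA
  rw [show rotPerm (aOf (phiB π x) x) (posOf (phiB π x) x) (aOf_le _ x) (posOf_lt _ x)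
      = rotPerm (posOf π x) (bOf π x) (le_bOf π x) (bOf_lt π x) from
    rotPerm_congr (phiB_aOf hB) phiB_posOf_x _ _ _ _]
  unfold phiB
  group

lemma phiB_spec_small (hB : CaseB π x) (y : Fin n) (hy : (y : ℕ) < (x : ℕ)) :
    (specAt (phiB π x) (posOf (phiB π x) y) ↔ specAt π (posOf π y)) := by
  have hposy := posOf_phiB π x y
  have hb := hB.hb
  have hp1 := hB.hp1
  have hwall := hB.hwall
  have hlemp := hB.hlemp
  have hx := w_posOf π x
  have hwq := w_posOf π y
  have hqn := posOf_lt π y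
  have hpn := posOf_lt π x
  have hbn := bOf_lt π x
  have hble := le_bOf π x
  have hqp : posOf π y ≠ posOf π x := by
    intro h
    rw [h, hx] at hwq
    omega
  rcases Nat.lt_or_ge (posOf π y) (posOf π x) with h1 | h1
  · -- q < p : untouched region (q = p-1 excluded)
    have hq1p : posOf π y + 1 < posOf π x := by
      rcases Nat.lt_or_ge (posOf π y + 1) (posOf π x) with h | h
      · exact h
      · exfalso
        have he : posOf π y = posOf π x - 1 := by omega
        rcases hlemp with h' | h'
        · omega
        · rw [← he] at h'
          omega
    rw [hposy, rotI_self hble (Or.inl h1)]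
    unfold specAt LempAt RempAt
    rw [phiB_w_left (posOf π y) (by omega), phiB_w_left (posOf π y - 1) (by omega),
      phiB_w_left (posOf π y + 1) (by omega)]
  · rcases Nat.lt_or_ge (bOf π x) (posOf π y) with h2 | h2
    · -- q > b : untouched (q = b+1 excluded by wall)
      have h4 : bOf π x + 1 < posOf π y := by
        rcases Nat.lt_or_ge (bOf π x + 1) (posOf π y) with h | h
        · exact h
        · exfalso
          have he : posOf π y = bOf π x + 1 := by omega
          rw [he] at hwq
          omega
      rw [hposy, rotI_self hble (Or.inr h2)]
      unfold specAt LempAt RempAt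
      rw [phiB_w_left (posOf π y) (by omega), phiB_w_left (posOf π y - 1) (by omega),
        phiB_w_left (posOf π y + 1) (by omega)]
    · -- p < q ≤ b : block region
      obtain ⟨q, hq⟩ : ∃ q, posOf π y = q := ⟨_, rfl⟩
      rw [hq] at hposy hwq hqn h1 h2 hqp
      rw [hq]
      have h3 : posOf π x < q := by omega
      rw [hposy, rotI_pred h3 h2]
      unfold specAt LempAt RempAt
      have e : q - 1 + 1 = q := by omega
      rw [e, phiB_w_mid (q - 1) (by omega) (by omega), e]
      have hblockq : w π q < (x : ℕ) := bOf_block π x h3 h2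
      rcases Nat.lt_or_ge q (bOf π x) with h6 | h6
      · rw [phiB_w_mid q (by omega) h6]
        rcases Nat.lt_or_ge (posOf π x + 1) q with h5 | h5
        · rw [phiB_w_mid (q - 1 - 1) (by omega) (by omega)]
          have e2 : q - 1 - 1 + 1 = q - 1 := by omega
          rw [e2]
          omega
        · -- q = p + 1
          have he : q = posOf π x + 1 := by omega
          subst he
          simp only [Nat.add_sub_cancel]
          rw [hx]
          rcases Nat.eq_zero_or_pos (posOf π x) with hp0 | hp0
          · omega
          · rw [phiB_w_left (posOf π x - 1) (Or.inl (by omega))]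
            rcases hlemp with h' | h' <;> omega
      · -- q = b
        have he : q = bOf π x := by omega
        subst he
        rw [phiB_w_at_b hB, hx]
        have hw : (x : ℕ) < w π (bOf π x + 1) := hwall
        rcases Nat.lt_or_ge (posOf π x + 1) (bOf π x) with h5 | h5
        · rw [phiB_w_mid (bOf π x - 1 - 1) (by omega) (by omega)]
          have e2 : bOf π x - 1 - 1 + 1 = bOf π x - 1 := by omega
          rw [e2]
          have hb1 : w π (bOf π x - 1) < (x : ℕ) := bOf_block π x (by omega) (by omega)
          omega
        · -- b = p + 1
          have he2 : bOf π x = posOf π x + 1 := by omega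
          rcases Nat.eq_zero_or_pos (posOf π x) with hp0 | hp0
          · have e4 : bOf π x - 1 = posOf π x := by omega
            rw [e4, hx]
            omega
          · have e3 : bOf π x - 1 - 1 = posOf π x - 1 := by omega
            rw [e3, phiB_w_left (posOf π x - 1) (Or.inl (by omega))]
            have e4 : bOf π x - 1 = posOf π x := by omega
            rw [e4, hx]
            rcases hlemp with h' | h' <;> omega

lemma S_phiB (hB : CaseB π x) : S (phiB π x) = - S π := by
  have hA : CaseA (phiB π x) x := caseA_of_spec (phiB_spec_x hB) (phiB_not_lemp_x hB)
  have := S_phiA hA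
  rw [phiA_phiB hB] at this
  omega

end CaseBLemmas

/-- the sign-reversing involution -/
noncomputable def flip (π : Equiv.Perm (Fin n)) : Equiv.Perm (Fin n) :=
  if h : (specSet π).Nonempty then
    if LempAt π (posOf π ((specSet π).min' h)) then phiB π ((specSet π).min' h)
    else phiA π ((specSet π).min' h)
  else π

section FlipLemmas
variable {π : Equiv.Perm (Fin n)}

lemma flip_props (h : (specSet π).Nonempty) :
    (specSet (flip π)).Nonempty ∧ flip (flip π) = π ∧ S (flip π) = - S π := by
  set x := (specSet π).min' h with hxdef
  have hxmem : x ∈ specSet π := Finset.min'_mem _ h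
  have hx_spec : specAt π (posOf π x) := (Finset.mem_filter.mp hxmem).2
  by_cases hL : LempAt π (posOf π x)
  · -- case B
    have hB := caseB_of_spec hx_spec hL
    have hflip : flip π = phiB π x := by
      unfold flip; rw [dif_pos h, ← hxdef, if_pos hL]
    have hxmem' : x ∈ specSet (phiB π x) :=
      Finset.mem_filter.mpr ⟨Finset.mem_univ _, phiB_spec_x hB⟩
    have hne' : (specSet (phiB π x)).Nonempty := ⟨x, hxmem'⟩
    have hminle : ∀ y ∈ specSet (phiB π x), x ≤ y := by
      intro y hy
      by_contra hc
      push_neg at hc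
      have hyx : (y : ℕ) < (x : ℕ) := hc
      have hsp : specAt π (posOf π y) :=
        (phiB_spec_small hB y hyx).mp ((Finset.mem_filter.mp hy).2)
      have hym : y ∈ specSet π := Finset.mem_filter.mpr ⟨Finset.mem_univ _, hsp⟩
      exact absurd (Finset.min'_le _ y hym) (not_le.mpr hc)
    have hmin' : (specSet (phiB π x)).min' hne' = x :=
      le_antisymm (Finset.min'_le _ _ hxmem') (Finset.le_min' _ hne' _ hminle)
    have hflip2 : flip (phiB π x) = phiA (phiB π x) x := by
      unfold flip
      rw [dif_pos hne', hmin', if_neg (phiB_not_lemp_x hB)]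
    refine ⟨hflip ▸ hne', ?_, ?_⟩
    · rw [hflip, hflip2, phiA_phiB hB]
    · rw [hflip, S_phiB hB]
  · -- case A
    have hA := caseA_of_spec hx_spec hL
    have hflip : flip π = phiA π x := by
      unfold flip; rw [dif_pos h, ← hxdef, if_neg hL]
    have hxmem' : x ∈ specSet (phiA π x) :=
      Finset.mem_filter.mpr ⟨Finset.mem_univ _, phiA_spec_x hA⟩
    have hne' : (specSet (phiA π x)).Nonempty := ⟨x, hxmem'⟩
    have hminle : ∀ y ∈ specSet (phiA π x), x ≤ y := by
      intro y hy
      by_contra hc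
      push_neg at hc
      have hyx : (y : ℕ) < (x : ℕ) := hc
      have hsp : specAt π (posOf π y) :=
        (phiA_spec_small hA y hyx).mp ((Finset.mem_filter.mp hy).2)
      have hym : y ∈ specSet π := Finset.mem_filter.mpr ⟨Finset.mem_univ _, hsp⟩
      exact absurd (Finset.min'_le _ y hym) (not_le.mpr hc)
    have hmin' : (specSet (phiA π x)).min' hne' = x :=
      le_antisymm (Finset.min'_le _ _ hxmem') (Finset.le_min' _ hne' _ hminle)
    have hflip2 : flip (phiA π x) = phiB (phiA π x) x := by
      unfold flip
      rw [dif_pos hne', hmin', if_pos (phiA_lemp_x hA)]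
    refine ⟨hflip ▸ hne', ?_, ?_⟩
    · rw [hflip, hflip2, phiB_phiA hA]
    · rw [hflip, S_phiA hA]

end FlipLemmas

def oc (n : ℕ) : ℕ := ((Finset.range n).filter (fun i => i + 1 < n ∧ i % 2 = 1)).card

lemma finSucc_val {i : Fin n} (h : (i : ℕ) + 1 < n) : ((finSucc i : Fin n) : ℕ) = (i : ℕ) + 1 := by
  simp [finSucc, Nat.mod_eq_of_lt h]

lemma w_apply (π : Equiv.Perm (Fin n)) (i : Fin n) : w π (i : ℕ) = (π i : ℕ) := by
  simp [w, i.isLt]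

lemma w_finSucc (π : Equiv.Perm (Fin n)) {i : Fin n} (h : (i : ℕ) + 1 < n) :
    w π ((i : ℕ) + 1) = (π (finSucc i) : ℕ) := by
  rw [← finSucc_val h, w_apply]

lemma altDesAt_iff (π : Equiv.Perm (Fin n)) (i : Fin n) :
    altDesAt π i ↔ ((i : ℕ) + 1 < n ∧
      (if ((i : ℕ) + 1) % 2 = 0 then w π i < w π ((i : ℕ) + 1)
        else w π ((i : ℕ) + 1) < w π i)) := by
  unfold altDesAt
  refine and_congr_right fun h => ?_
  rw [w_apply, w_finSucc π h]
  simp only [Fin.lt_def]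

lemma neg_one_pow_altdes (π : Equiv.Perm (Fin n)) :
    ((-1 : ℤ) ^ altdes π) = (-1 : ℤ) ^ (oc n) * S π := by
  have e1 : ((-1 : ℤ) ^ altdes π) = ∏ i : Fin n, (if altDesAt π i then (-1 : ℤ) else 1) := by
    rw [altdes, ← Finset.prod_const, Finset.prod_filter]
  have e2 : ((-1 : ℤ) ^ oc n)
      = ∏ i ∈ Finset.range n, (if i + 1 < n ∧ i % 2 = 1 then (-1 : ℤ) else 1) := by
    rw [oc, ← Finset.prod_const, Finset.prod_filter]
  rw [e1, e2, S,
    ← Fin.prod_univ_eq_prod_range (fun i => if i + 1 < n ∧ i % 2 = 1 then (-1 : ℤ) else 1) n,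
    ← Fin.prod_univ_eq_prod_range (fun i => dsign π i) n,
    ← Finset.prod_mul_distrib]
  apply Finset.prod_congr rfl
  intro i _
  unfold dsign
  rcases Nat.lt_or_ge ((i : ℕ) + 1) n with h | h
  · have hd : w π ((i : ℕ) + 1) ≠ w π (i : ℕ) := w_ne π h (by omega) (by omega)
    by_cases hA : altDesAt π i
    · rw [if_pos hA]
      obtain ⟨-, hc⟩ := (altDesAt_iff π i).mp hA
      by_cases hp : ((i : ℕ) + 1) % 2 = 0
      · rw [if_pos hp] at hc
        rw [if_pos (show (i : ℕ) + 1 < n ∧ (i : ℕ) % 2 = 1 by omega), if_neg (by omega)]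
        ring
      · rw [if_neg hp] at hc
        rw [if_neg (show ¬((i : ℕ) + 1 < n ∧ (i : ℕ) % 2 = 1) by omega), if_pos (by omega)]
        ring
    · rw [if_neg hA]
      by_cases hp : ((i : ℕ) + 1) % 2 = 0
      · have hc : ¬ (w π (i : ℕ) < w π ((i : ℕ) + 1)) := fun hcc =>
          hA ((altDesAt_iff π i).mpr ⟨h, by rw [if_pos hp]; exact hcc⟩)
        rw [if_pos (show (i : ℕ) + 1 < n ∧ (i : ℕ) % 2 = 1 by omega), if_pos (by omega)]
        ring
      · have hc : ¬ (w π ((i : ℕ) + 1) < w π (i : ℕ)) := fun hcc =>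
          hA ((altDesAt_iff π i).mpr ⟨h, by rw [if_neg hp]; exact hcc⟩)
        rw [if_neg (show ¬((i : ℕ) + 1 < n ∧ (i : ℕ) % 2 = 1) by omega), if_neg (by omega)]
        ring
  · have hA : ¬ altDesAt π i := fun hc => by
      have := ((altDesAt_iff π i).mp hc).1; omega
    have hs : w π ((i : ℕ) + 1) = n := w_sentinel π (by omega)
    have hl : w π (i : ℕ) < n := w_lt π i.isLt
    rw [if_neg hA, if_neg (by omega), if_neg (by omega)]
    ring

/-- `π` is up-down (sentinel-inclusive formulation) -/
def UpDownP (π : Equiv.Perm (Fin n)) : Prop :=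
  ∀ i : ℕ, i < n → (i % 2 = 0 ↔ w π i < w π (i + 1))

lemma specAt_all_pos (h : ∀ x : Fin n, ¬ specAt π (posOf π x)) :
    ∀ p : ℕ, p < n → ¬ specAt π p := by
  intro p hp
  have := h (π ⟨p, hp⟩)
  have e : posOf π (π ⟨p, hp⟩) = p := by
    unfold posOf
    rw [Equiv.symm_apply_apply]
  rwa [e] at this

lemma UD_of_noSpec {π : Equiv.Perm (Fin n)} (h : ∀ p : ℕ, p < n → ¬ specAt π p) :
    UpDownP π := by
  intro i
  induction i with
  | zero =>
    intro h0
    have hns := h 0 h0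
    unfold specAt LempAt RempAt at hns
    rw [not_not] at hns
    have hR : w π 0 < w π (0 + 1) := hns.mp (Or.inl rfl)
    exact ⟨fun _ => hR, fun _ => rfl⟩
  | succ i ih =>
    intro hi
    have hP := ih (by omega)
    have hns := h (i + 1) hi
    unfold specAt LempAt RempAt at hns
    rw [not_not] at hns
    simp only [Nat.add_sub_cancel] at hns
    have hd : w π i ≠ w π (i + 1) := w_ne π (by omega) hi (by omega)
    constructor
    · intro he
      apply hns.mp
      right
      have h1 : ¬ (i % 2 = 0) := by omega
      have h2 : ¬ (w π i < w π (i + 1)) := fun hc => h1 (hP.mpr hc)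
      omega
    · intro hc
      rcases hns.mpr hc with h' | h'
      · omega
      · have h1 : ¬ (w π i < w π (i + 1)) := by omega
        have h2 : ¬ (i % 2 = 0) := fun hc2 => h1 (hP.mp hc2)
        omega

lemma noSpec_of_UD {π : Equiv.Perm (Fin n)} (h : UpDownP π) :
    ∀ p : ℕ, p < n → ¬ specAt π p := by
  intro p hp
  unfold specAt LempAt RempAt
  rw [not_not]
  have hR : w π p < w π (p + 1) ↔ p % 2 = 0 := (h p hp).symm
  rcases Nat.eq_zero_or_pos p with h0 | h0
  · subst h0
    constructor
    · intro _; exact hR.mpr rfl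
    · intro _; exact Or.inl rfl
  · have hd : w π (p - 1) ≠ w π p := w_ne π (by omega) hp (by omega)
    have hP : (p - 1) % 2 = 0 ↔ w π (p - 1) < w π (p - 1 + 1) := h (p - 1) (by omega)
    have e : p - 1 + 1 = p := by omega
    rw [e] at hP
    constructor
    · intro hL
      apply hR.mpr
      rcases hL with h' | h'
      · omega
      · have h1 : ¬ (w π (p - 1) < w π p) := by omega
        have h2 : ¬ ((p - 1) % 2 = 0) := fun hc => h1 (hP.mp hc)
        omega
    · intro hRe
      right
      have h1 := hR.mp hRe
      have h2 : ¬ ((p - 1) % 2 = 0) := by omega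
      have h3 : ¬ (w π (p - 1) < w π p) := fun hc => h2 (hP.mpr hc)
      omega

lemma noSpec_iff {π : Equiv.Perm (Fin n)} : specSet π = ∅ ↔ UpDownP π := by
  constructor
  · intro h
    apply UD_of_noSpec
    apply specAt_all_pos
    intro x hc
    have : x ∈ specSet π := Finset.mem_filter.mpr ⟨Finset.mem_univ _, hc⟩
    rw [h] at this
    exact absurd this (Finset.notMem_empty x)
  · intro h
    rw [Finset.eq_empty_iff_forall_notMem]
    intro x hx
    exact noSpec_of_UD h (posOf π x) (posOf_lt π x) ((Finset.mem_filter.mp hx).2)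

lemma UD_n_odd {π : Equiv.Perm (Fin n)} (h : UpDownP π) (hn : 0 < n) : n % 2 = 1 := by
  have := h (n - 1) (by omega)
  rw [w_sentinel π (by omega : ¬ (n - 1 + 1 < n))] at this
  have := this.mpr (w_lt π (by omega))
  omega

lemma altdes_zero_of_UD {π : Equiv.Perm (Fin n)} (h : UpDownP π) : altdes π = 0 := by
  unfold altdes
  rw [Finset.card_eq_zero, Finset.filter_eq_empty_iff]
  intro i _
  rw [altDesAt_iff]
  intro ⟨h1, h2⟩
  have := h i (by omega)
  split_ifs at h2 with hpar
  · have : ¬ ((i : ℕ) % 2 = 0) := by omega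
    have hww := this
    have := fun hc => hww ((h i (by omega)).mpr hc)
    omega
  · have : (i : ℕ) % 2 = 0 := by omega
    have := (h i (by omega)).mp this
    omega


instance (π : Equiv.Perm (Fin n)) : Decidable (UpDownP π) := by
  unfold UpDownP; infer_instance

lemma downUp_iff (π : Equiv.Perm (Fin n)) :
    DownUp π ↔ ∀ i : ℕ, i + 1 < n →
      (if i % 2 = 0 then w π (i + 1) < w π i else w π i < w π (i + 1)) := by
  constructor
  · intro h i hi
    have hin : i < n := by omega
    have hthis := h ⟨i, hin⟩ hi
    simp only [Fin.lt_def] at hthis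
    have e1 : w π i = (π ⟨i, hin⟩ : ℕ) := w_apply π ⟨i, hin⟩
    have e2 : w π (i + 1) = (π (finSucc ⟨i, hin⟩) : ℕ) := w_finSucc π (i := ⟨i, hin⟩) hi
    rw [e1, e2]
    exact hthis
  · intro h i hi
    have hthis := h (i : ℕ) hi
    rw [w_apply, w_finSucc π hi] at hthis
    simp only [Fin.lt_def]
    exact hthis

lemma w_revPerm (π : Equiv.Perm (Fin n)) (i : ℕ) (h : i < n) :
    w (Fin.revPerm * π) i = n - 1 - w π i := by
  simp only [w, dif_pos h, Equiv.Perm.mul_apply, Fin.revPerm_apply, Fin.val_rev]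
  have := (π ⟨i, h⟩).isLt
  omega

lemma revPerm_mul_revPerm : (Fin.revPerm : Equiv.Perm (Fin n)) * Fin.revPerm = 1 := by
  apply Equiv.ext
  intro i
  simp [Fin.rev_rev]

lemma UD_iff_DU_rev (hn : n % 2 = 1) (π : Equiv.Perm (Fin n)) :
    UpDownP π ↔ DownUp (Fin.revPerm * π) := by
  rw [downUp_iff]
  constructor
  · intro h i hi
    have h1 := h i (by omega)
    have hb1 : w π i < n := w_lt π (by omega)
    have hb2 : w π (i + 1) < n := w_lt π (by omega)
    have hd : w π i ≠ w π (i + 1) := w_ne π (by omega) (by omega) (by omega)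
    rw [w_revPerm π i (by omega), w_revPerm π (i + 1) (by omega)]
    split_ifs with hp
    · have := h1.mp hp
      omega
    · have h2 : ¬ (w π i < w π (i + 1)) := fun hc => hp (h1.mpr hc)
      omega
  · intro h i hi
    rcases Nat.lt_or_ge (i + 1) n with h2 | h2
    · have hthis := h i h2
      have hb1 : w π i < n := w_lt π (by omega)
      have hb2 : w π (i + 1) < n := w_lt π (by omega)
      rw [w_revPerm π i (by omega), w_revPerm π (i + 1) (by omega)] at hthis
      split_ifs at hthis with hp
      · exact ⟨fun _ => by omega, fun _ => hp⟩
      · constructor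
        · intro hc; omega
        · intro hc
          omega
    · have he : i + 1 = n := by omega
      have hs : w π (i + 1) = n := w_sentinel π (by omega)
      have hb1 : w π i < n := w_lt π (by omega)
      constructor
      · intro _; omega
      · intro _; omega

lemma card_UD_eq (hn : n % 2 = 1) :
    (Finset.univ.filter (fun π : Equiv.Perm (Fin n) => UpDownP π)).card
      = (Finset.univ.filter (fun π : Equiv.Perm (Fin n) => DownUp π)).card := by
  apply Finset.card_nbij' (fun π => Fin.revPerm * π) (fun σ => Fin.revPerm * σ)
  · intro π hπ
    refine Finset.mem_filter.mpr ⟨Finset.mem_univ _, ?_⟩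
    exact (UD_iff_DU_rev hn π).mp (Finset.mem_filter.mp hπ).2
  · intro σ hσ
    refine Finset.mem_filter.mpr ⟨Finset.mem_univ _, ?_⟩
    apply (UD_iff_DU_rev hn (Fin.revPerm * σ)).mpr
    rw [← mul_assoc, revPerm_mul_revPerm, one_mul]
    exact (Finset.mem_filter.mp hσ).2
  · intro π _
    dsimp only
    rw [← mul_assoc, revPerm_mul_revPerm, one_mul]
  · intro σ _
    dsimp only
    rw [← mul_assoc, revPerm_mul_revPerm, one_mul]

lemma key (n : ℕ) : (∑ π : Equiv.Perm (Fin n), (-1 : ℤ) ^ altdes π)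
    = ((Finset.univ.filter (fun π : Equiv.Perm (Fin n) => UpDownP π)).card : ℤ) := by
  classical
  rw [← Finset.sum_filter_add_sum_filter_not Finset.univ
      (fun π : Equiv.Perm (Fin n) => (specSet π).Nonempty) (fun π => (-1 : ℤ) ^ altdes π)]
  have h1 : (∑ π ∈ Finset.univ.filter (fun π : Equiv.Perm (Fin n) => (specSet π).Nonempty),
      (-1 : ℤ) ^ altdes π) = 0 := by
    apply Finset.sum_involution (fun π _ => flip π)
    · intro π hπ
      have hne := (Finset.mem_filter.mp hπ).2
      obtain ⟨_, _, hS⟩ := flip_props hne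
      rw [neg_one_pow_altdes, neg_one_pow_altdes, hS]
      ring
    · intro π hπ _
      have hne := (Finset.mem_filter.mp hπ).2
      obtain ⟨_, _, hS⟩ := flip_props hne
      intro hc
      rw [hc] at hS
      have := S_ne_zero π
      omega
    · intro π hπ
      have hne := (Finset.mem_filter.mp hπ).2
      obtain ⟨hh, _, _⟩ := flip_props hne
      exact Finset.mem_filter.mpr ⟨Finset.mem_univ _, hh⟩
    · intro π hπ
      exact (flip_props (Finset.mem_filter.mp hπ).2).2.1
  rw [h1, zero_add]
  have h2 : Finset.univ.filter (fun π : Equiv.Perm (Fin n) => ¬ (specSet π).Nonempty)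
      = Finset.univ.filter (fun π : Equiv.Perm (Fin n) => UpDownP π) := by
    apply Finset.filter_congr
    intro π _
    rw [Finset.not_nonempty_iff_eq_empty, noSpec_iff]
  rw [h2]
  rw [Finset.sum_congr rfl (fun π hπ => by
    rw [altdes_zero_of_UD (Finset.mem_filter.mp hπ).2, pow_zero])]
  rw [Finset.sum_const, nsmul_eq_mul, mul_one]

end Stmt18Aux

/-- `Â_{2n+1}(-1) = E_{2n+1}` and `Â_{2n}(-1) = 0` for `n ≥ 1`. -/
theorem stmt18 (n : ℕ) :
    (∑ π : Equiv.Perm (Fin (2 * n + 1)), (-1 : ℤ) ^ altdes π) = eulerNum (2 * n + 1) ∧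
    (1 ≤ n → (∑ π : Equiv.Perm (Fin (2 * n)), (-1 : ℤ) ^ altdes π) = 0) := by
  constructor
  · rw [Stmt18Aux.key (2 * n + 1), Stmt18Aux.card_UD_eq (by omega)]
    rfl
  · intro hn
    rw [Stmt18Aux.key (2 * n)]
    have h : Finset.univ.filter (fun π : Equiv.Perm (Fin (2 * n)) => Stmt18Aux.UpDownP π)
        = ∅ := by
      rw [Finset.filter_eq_empty_iff]
      intro π _
      intro hUD
      have := Stmt18Aux.UD_n_odd hUD (by omega)
      omega
    rw [h]
    simp
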